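/- Let b be a prime, α ≥ 2 an integer, λ > 1/(2α) a real number, and n ∈ ℕ. Then ∑_{k ∈ E_b, b^n | k} b^{−2λ μ_α(⌊k/b⌋)} ≤ A_{α,b,λ,2} / b^{4λn}, where A_{α,b,λ,2} = (1/(b−1)) ∑_{v=2}^{α−1} ∏_{i=1}^{v} (b^{2λ}(b−1)/(b^{2λi} − 1)) + (b^{2λ}/(b^{2λα} − b)) ∏_{i=1}^{α−1} (b^{2λ}(b−1)/(b^{2λi} − 1)). -/

import Mathlib

open MeasureTheory Finset

noncomputable section

/-- The `b`-adic digit sum `δ_b(k)`. -/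
def bdelta (b k : ℕ) : ℕ := (Nat.digits b k).sum

/-- `k ∈ E_b`, i.e. `k ≥ 1` and `δ_b(k) ≡ 0 (mod b)`. -/
def ebMem (b k : ℕ) : Prop := k ≠ 0 ∧ bdelta b k % b = 0

/-- The set of `0`-indexed positions of the nonzero `b`-adic digits of `k`. -/
def digitSet (b k : ℕ) : Finset ℕ := (Finset.range (k + 1)).filter fun i => k / b ^ i % b ≠ 0

/-- `μ_α(k) = a_1 + ⋯ + a_{min(v,α)}`, the sum of the `min(v,α)` largest exponents
(counted from `1`) of the nonzero `b`-adic digits of `k`; `μ_α(0) = 0`. -/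
def mua (b α k : ℕ) : ℕ :=
  ∑ i ∈ (digitSet b k).filter fun i => ((digitSet b k).filter fun j => i < j).card < α, (i + 1)

/-- The constant `A_{α,b,λ,1}`. -/
def Aone (b α : ℕ) (l : ℝ) : ℝ :=
  ((b : ℝ) / ((b : ℝ) - 1)) *
    ((∑ v ∈ Finset.Icc 1 (α - 1), ∏ i ∈ Finset.Icc 1 v,
        (((b : ℝ) - 1) / ((b : ℝ) ^ (2 * l * i) - 1)))
      + (((b : ℝ) ^ (2 * l * α) - 1) / ((b : ℝ) ^ (2 * l * α) - b)) *
          ∏ i ∈ Finset.Icc 1 α, (((b : ℝ) - 1) / ((b : ℝ) ^ (2 * l * i) - 1)))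

/-- The constant `A_{α,b,λ,2}`. -/
def Atwo (b α : ℕ) (l : ℝ) : ℝ :=
  (1 / ((b : ℝ) - 1)) *
      (∑ v ∈ Finset.Icc 2 (α - 1), ∏ i ∈ Finset.Icc 1 v,
        ((b : ℝ) ^ (2 * l) * ((b : ℝ) - 1) / ((b : ℝ) ^ (2 * l * i) - 1)))
    + ((b : ℝ) ^ (2 * l) / ((b : ℝ) ^ (2 * l * α) - b)) *
        ∏ i ∈ Finset.Icc 1 (α - 1),
          ((b : ℝ) ^ (2 * l) * ((b : ℝ) - 1) / ((b : ℝ) ^ (2 * l * i) - 1))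


namespace EbAux

variable {b : ℕ}

def dig (b p m : ℕ) : ℕ := m / b ^ p % b

variable {b : ℕ}

lemma dig_lt (hb : 1 < b) (p m : ℕ) : dig b p m < b := Nat.mod_lt _ (by omega)

lemma self_lt_pow (hb : 1 < b) (m : ℕ) : m < b ^ m :=
  lt_of_lt_of_le (Nat.lt_two_pow_self (n := m)) (Nat.pow_le_pow_left hb m)

lemma dig_eq_mod_div (p m : ℕ) : dig b p m = m % b ^ (p+1) / b ^ p := by
  rw [dig, ← Nat.mod_mul_right_div_self, pow_succ]

lemma dig_shift (p m : ℕ) : dig b p (m / b) = dig b (p+1) m := by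
  simp [dig, Nat.div_div_eq_div_mul, pow_succ, mul_comm b]

lemma sum_dig_aux (hb : 1 < b) : ∀ (K m : ℕ), m < b ^ K → bdelta b m = ∑ i ∈ range K, dig b i m := by
  intro K
  induction K with
  | zero => intro m hm; rw [pow_zero, Nat.lt_one_iff] at hm; subst hm; simp [bdelta]
  | succ K ih =>
    intro m hm
    rcases Nat.eq_zero_or_pos m with h0 | h0
    · subst h0; simp [bdelta, dig]
    · have hdig : Nat.digits b m = m % b :: Nat.digits b (m / b) := Nat.digits_def' hb h0
      have hmb : m / b < b ^ K := by
        rw [Nat.div_lt_iff_lt_mul (by omega)]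
        calc m < b ^ (K+1) := hm
        _ = b ^ K * b := by ring
      have ihm := ih (m / b) hmb
      have hsum : ∑ i ∈ range (K+1), dig b i m = dig b 0 m + ∑ i ∈ range K, dig b (i+1) m := by
        rw [Finset.sum_range_succ']; rw [add_comm]
      rw [bdelta, hdig, List.sum_cons, hsum]
      congr 1
      · simp [dig]
      · rw [show (Nat.digits b (m/b)).sum = bdelta b (m/b) from rfl, ihm]
        exact Finset.sum_congr rfl (fun i _ => dig_shift i m)

lemma sum_dig (hb : 1 < b) (m : ℕ) : bdelta b m = ∑ i ∈ range (m+1), dig b i m :=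
  sum_dig_aux hb (m+1) m (lt_trans (self_lt_pow hb m) (Nat.pow_lt_pow_right hb (by omega)))

lemma dig_zero_of_lt (hb : 1 < b) {m p : ℕ} (h : m < b ^ p) : dig b p m = 0 := by
  simp [dig, Nat.div_eq_of_lt h]

lemma eq_of_dig_eq_aux (hb : 1 < b) : ∀ (K m1 m2 : ℕ), m1 < b ^ K → m2 < b ^ K →
    (∀ i, dig b i m1 = dig b i m2) → m1 = m2 := by
  intro K
  induction K with
  | zero => intro m1 m2 h1 h2 _; rw [pow_zero, Nat.lt_one_iff] at h1 h2; omega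
  | succ K ih =>
    intro m1 m2 h1 h2 hd
    have e0 : m1 % b = m2 % b := by have := hd 0; simpa [dig] using this
    have e1 : m1 / b = m2 / b := by
      apply ih
      · rw [Nat.div_lt_iff_lt_mul (by omega)]; calc m1 < b ^ (K+1) := h1
          _ = b ^ K * b := by ring
      · rw [Nat.div_lt_iff_lt_mul (by omega)]; calc m2 < b ^ (K+1) := h2
          _ = b ^ K * b := by ring
      · intro i; rw [dig_shift, dig_shift]; exact hd (i+1)
    have d1 := Nat.div_add_mod m1 b
    have d2 := Nat.div_add_mod m2 b
    rw [e1] at d1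
    omega

lemma eq_of_dig_eq (hb : 1 < b) {m1 m2 : ℕ} (h : ∀ i, dig b i m1 = dig b i m2) : m1 = m2 := by
  have key : ∀ m : ℕ, m < b ^ (m+1) := fun m =>
    lt_trans (self_lt_pow hb m) (Nat.pow_lt_pow_right hb (by omega))
  rcases le_total m1 m2 with hle | hle
  · exact eq_of_dig_eq_aux hb (m2+1) m1 m2 (lt_of_le_of_lt hle (key m2)) (key m2) h
  · exact (eq_of_dig_eq_aux hb (m1+1) m2 m1 (lt_of_le_of_lt hle (key m1)) (key m1)
      (fun i => (h i).symm)).symm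

lemma mem_digitSet (hb : 1 < b) {i m : ℕ} : i ∈ digitSet b m ↔ dig b i m ≠ 0 := by
  constructor
  · intro h; exact (Finset.mem_filter.1 h).2
  · intro h
    refine Finset.mem_filter.2 ⟨Finset.mem_range.2 ?_, h⟩
    by_contra hc
    push_neg at hc
    have : m < b ^ i := by
      calc m < m + 1 := by omega
      _ ≤ i := hc
      _ < b ^ i := self_lt_pow hb i
    exact h (dig_zero_of_lt hb this)

lemma digitSet_subset_range (m : ℕ) : digitSet b m ⊆ range (m+1) := Finset.filter_subset _ _

lemma bdelta_eq_sum_digitSet (hb : 1 < b) (m : ℕ) :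
    bdelta b m = ∑ i ∈ digitSet b m, dig b i m := by
  rw [sum_dig hb m]
  refine (Finset.sum_subset (digitSet_subset_range m) ?_).symm
  intro i _ hi
  by_contra h
  exact hi (mem_digitSet hb |>.2 h)

lemma digitSet_ge (hb : 1 < b) {N m : ℕ} (hN : b ^ N ∣ m) {i : ℕ} (hi : i ∈ digitSet b m) :
    N ≤ i := by
  by_contra h
  push_neg at h
  have hd := (mem_digitSet hb).1 hi
  apply hd
  obtain ⟨j, rfl⟩ := hN
  have hNi : b ^ N = b ^ i * b ^ (N - i) := by rw [← pow_add]; congr 1; omega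
  rw [dig, hNi, mul_assoc, Nat.mul_div_cancel_left _ (pow_pos (by omega : 0 < b) i)]
  exact Nat.mod_eq_zero_of_dvd (dvd_mul_of_dvd_left (dvd_pow_self b (by omega)) j)


/-- upward closure of the "top α" filter -/
lemma upward {D : Finset ℕ} {α i j : ℕ} (hi : i ∈ D.filter fun i => (D.filter fun j => i < j).card < α)
    (hj : j ∈ D) (hij : i < j) : j ∈ D.filter fun i => (D.filter fun j => i < j).card < α := by
  rw [Finset.mem_filter] at hi ⊢
  refine ⟨hj, lt_of_le_of_lt ?_ hi.2⟩
  apply Finset.card_le_card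
  intro k hk
  rw [Finset.mem_filter] at hk ⊢
  exact ⟨hk.1, lt_trans hij hk.2⟩

lemma card_filter_lt (α : ℕ) : ∀ (v : ℕ) (D : Finset ℕ), D.card = v →
    (D.filter fun i => (D.filter fun j => i < j).card < α).card = min v α := by
  intro v
  induction v with
  | zero => intro D hD; rw [Finset.card_eq_zero] at hD; subst hD; simp
  | succ v ih =>
    intro D hD
    have hne : D.Nonempty := by rw [← Finset.card_pos]; omega
    set d := D.min' hne with hd
    have hdmem : d ∈ D := D.min'_mem hne
    set D' := D.erase d with hD'
    have hcard' : D'.card = v := by rw [hD', Finset.card_erase_of_mem hdmem]; omega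
    have hins : D = insert d D' := (Finset.insert_erase hdmem).symm
    have hdn : d ∉ D' := Finset.notMem_erase _ _
    have hgt : ∀ j ∈ D', d < j := by
      intro j hj
      have : d ≤ j := D.min'_le j (Finset.mem_of_mem_erase hj)
      have : j ≠ d := Finset.ne_of_mem_erase hj
      omega
    -- inner filters
    have hfilt : ∀ i, (D.filter fun j => i < j) = if i < d then insert d (D'.filter fun j => i < j) else (D'.filter fun j => i < j) := by
      intro i
      rw [hins, Finset.filter_insert]
    have hfd : (D.filter fun j => d < j) = D' := by
      rw [hfilt d, if_neg (lt_irrefl d)]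
      apply Finset.filter_true_of_mem
      exact hgt
    have hcongr : (D'.filter fun i => (D.filter fun j => i < j).card < α)
        = (D'.filter fun i => (D'.filter fun j => i < j).card < α) := by
      apply Finset.filter_congr
      intro i hi
      rw [hfilt i, if_neg (by have := hgt i hi; omega)]
    have hsplit := Finset.filter_insert (fun i => (D.filter fun j => i < j).card < α) d D'
    rw [← hins] at hsplit
    rw [hsplit, hfd, hcard']
    by_cases hv : v < α
    · rw [if_pos hv, Finset.card_insert_of_notMem (fun hc => hdn (Finset.mem_of_mem_filter _ hc)),
        hcongr, ih D' hcard']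
      omega
    · rw [if_neg hv, hcongr, ih D' hcard']
      omega


def keyset (b α m : ℕ) : Finset ℕ :=
  (digitSet b m).filter fun i => ((digitSet b m).filter fun j => i < j).card < α


lemma keyset_subset (α m : ℕ) : keyset b α m ⊆ digitSet b m := Finset.filter_subset _ _

lemma upward_keyset {α m i j : ℕ} (hi : i ∈ keyset b α m) (hj : j ∈ digitSet b m) (hij : i < j) :
    j ∈ keyset b α m := upward hi hj hij

lemma dig_mod {p t m : ℕ} (hpt : p < t) : dig b p (m % b ^ t) = dig b p m := by
  rw [dig_eq_mod_div, dig_eq_mod_div, Nat.mod_mod_of_dvd _ (pow_dvd_pow b (by omega))]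

lemma mod_pow_eq_zero (hb : 1 < b) {m t : ℕ} (h : ∀ p < t, dig b p m = 0) : m % b ^ t = 0 := by
  have : ∀ i, dig b i (m % b ^ t) = dig b i 0 := by
    intro i
    have hz : dig b i 0 = 0 := by simp [dig]
    rw [hz]
    rcases lt_or_ge i t with hit | hit
    · rw [dig_mod hit]; exact h i hit
    · exact dig_zero_of_lt hb (lt_of_lt_of_le (Nat.mod_lt _ (by positivity))
        (Nat.pow_le_pow_right (by omega) hit))
  simpa using eq_of_dig_eq hb this

/-- core injectivity: two valid numbers with the same keyset `T`, agreeing on digits in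
`T.erase t` (`t` the min of `T`) and below `t`, are equal. -/
lemma inj_core (hb : 1 < b) {α : ℕ} {T : Finset ℕ} {t : ℕ} (htT : t ∈ T)
    (htmin : ∀ p ∈ T, t ≤ p) {m1 m2 : ℕ}
    (hd1 : bdelta b m1 % b = 0) (hk1 : keyset b α m1 = T)
    (hd2 : bdelta b m2 % b = 0) (hk2 : keyset b α m2 = T)
    (hhigh : ∀ p ∈ T.erase t, dig b p m1 = dig b p m2)
    (hlow : m1 % b ^ t = m2 % b ^ t) : m1 = m2 := by
  have hdig_ne_t : ∀ p, p ≠ t → dig b p m1 = dig b p m2 := by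
    intro p hpt
    rcases lt_or_ge p t with hlt | hge
    · rw [← dig_mod (b := b) (m := m1) hlt, ← dig_mod (b := b) (m := m2) hlt, hlow]
    · have hgt : t < p := by omega
      by_cases hpT : p ∈ T
      · exact hhigh p (Finset.mem_erase.2 ⟨hpt, hpT⟩)
      · have z1 : dig b p m1 = 0 := by
          by_contra hz
          exact hpT (hk1 ▸ upward_keyset (hk1.symm ▸ htT) ((mem_digitSet hb).2 hz) hgt)
        have z2 : dig b p m2 = 0 := by
          by_contra hz
          exact hpT (hk2 ▸ upward_keyset (hk2.symm ▸ htT) ((mem_digitSet hb).2 hz) hgt)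
        rw [z1, z2]
  -- digit at t
  set K := m1 + m2 + t + 1 with hK
  have hm1K : m1 < b ^ K := lt_of_le_of_lt (by omega) (lt_of_lt_of_le (self_lt_pow hb (m1+m2+t+1)) (le_refl _))
  have hm2K : m2 < b ^ K := lt_of_le_of_lt (by omega) (lt_of_lt_of_le (self_lt_pow hb (m1+m2+t+1)) (le_refl _))
  have htK : t ∈ range K := Finset.mem_range.2 (by omega)
  have hb1 : bdelta b m1 = dig b t m1 + ∑ i ∈ (range K).erase t, dig b i m1 :=
    (sum_dig_aux hb K m1 hm1K).trans (Finset.add_sum_erase (range K) (fun i => dig b i m1) htK).symm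
  have hb2 : bdelta b m2 = dig b t m2 + ∑ i ∈ (range K).erase t, dig b i m2 :=
    (sum_dig_aux hb K m2 hm2K).trans (Finset.add_sum_erase (range K) (fun i => dig b i m2) htK).symm
  have hA : ∑ i ∈ (range K).erase t, dig b i m1 = ∑ i ∈ (range K).erase t, dig b i m2 :=
    Finset.sum_congr rfl fun i hi => hdig_ne_t i (Finset.ne_of_mem_erase hi)
  have hmod : dig b t m1 % b = dig b t m2 % b := by
    have e1 : (dig b t m1 + ∑ i ∈ (range K).erase t, dig b i m1) % b = 0 := hb1 ▸ hd1
    have e2 : (dig b t m2 + ∑ i ∈ (range K).erase t, dig b i m2) % b = 0 := hb2 ▸ hd2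
    rw [← hA] at e2
    have : (dig b t m1 + ∑ i ∈ (range K).erase t, dig b i m1) ≡
        (dig b t m2 + ∑ i ∈ (range K).erase t, dig b i m1) [MOD b] := by
      unfold Nat.ModEq; omega
    exact Nat.ModEq.add_right_cancel' _ this
  have ht12 : dig b t m1 = dig b t m2 := by
    have l1 := dig_lt hb t m1
    have l2 := dig_lt hb t m2
    rwa [Nat.mod_eq_of_lt l1, Nat.mod_eq_of_lt l2] at hmod
  exact eq_of_dig_eq hb fun i => by
    by_cases hit : i = t
    · rw [hit]; exact ht12
    · exact hdig_ne_t i hit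

/-- counting: middle case, `digitSet m = T` exactly. -/
lemma count_mid (hb : 1 < b) (α : ℕ) {T : Finset ℕ} {t : ℕ} (htT : t ∈ T)
    (htmin : ∀ p ∈ T, t ≤ p) (F : Finset ℕ)
    (hF : ∀ m ∈ F, bdelta b m % b = 0 ∧ keyset b α m = T ∧ digitSet b m = T) :
    F.card ≤ (b-1) ^ (T.card - 1) := by
  have hcard : ((T.erase t).pi fun _ => Finset.Ioo 0 b).card = (b-1) ^ (T.card - 1) := by
    rw [Finset.card_pi, Finset.prod_const, Nat.card_Ioo, Finset.card_erase_of_mem htT]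
    norm_num
  rw [← hcard]
  apply Finset.card_le_card_of_injOn (fun m => fun p _ => dig b p m)
  · intro m hm
    rw [Finset.mem_coe, Finset.mem_pi]
    intro p hp
    have hpT : p ∈ T := Finset.mem_of_mem_erase hp
    have hpd : p ∈ digitSet b m := (hF m hm).2.2.symm ▸ hpT
    rw [Finset.mem_Ioo]
    exact ⟨Nat.pos_of_ne_zero ((mem_digitSet hb).1 hpd), dig_lt hb p m⟩
  · intro m1 h1 m2 h2 he
    simp only [Finset.mem_coe] at h1 h2
    obtain ⟨hd1, hk1, hds1⟩ := hF m1 h1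
    obtain ⟨hd2, hk2, hds2⟩ := hF m2 h2
    have hhigh : ∀ p ∈ T.erase t, dig b p m1 = dig b p m2 := fun p hp =>
      congrFun (congrFun he p) hp
    have hlow : m1 % b ^ t = m2 % b ^ t := by
      have z1 : m1 % b ^ t = 0 := mod_pow_eq_zero hb fun p hp => by
        by_contra hz
        have : p ∈ T := hds1 ▸ (mem_digitSet hb).2 hz
        have := htmin p this
        omega
      have z2 : m2 % b ^ t = 0 := mod_pow_eq_zero hb fun p hp => by
        by_contra hz
        have : p ∈ T := hds2 ▸ (mem_digitSet hb).2 hz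
        have := htmin p this
        omega
      rw [z1, z2]
    exact inj_core hb htT htmin hd1 hk1 hd2 hk2 hhigh hlow

/-- counting: general case with lower digits free above `b^N`. -/
lemma count_tail (hb : 1 < b) (α N : ℕ) {T : Finset ℕ} {t : ℕ} (htT : t ∈ T)
    (htmin : ∀ p ∈ T, t ≤ p) (hNt : N ≤ t) (F : Finset ℕ)
    (hF : ∀ m ∈ F, bdelta b m % b = 0 ∧ keyset b α m = T ∧ b ^ N ∣ m) :
    F.card ≤ (b-1) ^ (T.card - 1) * b ^ (t - N) := by
  have hcard : (((T.erase t).pi fun _ => Finset.Ioo 0 b) ×ˢ Finset.range (b ^ (t - N))).card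
      = (b-1) ^ (T.card - 1) * b ^ (t - N) := by
    rw [Finset.card_product, Finset.card_pi, Finset.prod_const, Nat.card_Ioo,
      Finset.card_erase_of_mem htT, Finset.card_range]
    norm_num
  rw [← hcard]
  apply Finset.card_le_card_of_injOn (fun m => (fun p _ => dig b p m, m % b ^ t / b ^ N))
  · intro m hm
    rw [Finset.mem_coe, Finset.mem_product]
    constructor
    · rw [Finset.mem_pi]
      intro p hp
      have hpT : p ∈ T := Finset.mem_of_mem_erase hp
      have hpd : p ∈ digitSet b m := keyset_subset α m ((hF m hm).2.1.symm ▸ hpT)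
      rw [Finset.mem_Ioo]
      exact ⟨Nat.pos_of_ne_zero ((mem_digitSet hb).1 hpd), dig_lt hb p m⟩
    · rw [Finset.mem_range, Nat.div_lt_iff_lt_mul (by positivity), ← pow_add]
      have : t - N + N = t := by omega
      rw [this]
      exact Nat.mod_lt _ (by positivity)
  · intro m1 h1 m2 h2 he
    simp only [Finset.mem_coe] at h1 h2
    obtain ⟨hd1, hk1, hv1⟩ := hF m1 h1
    obtain ⟨hd2, hk2, hv2⟩ := hF m2 h2
    have he1 := congrArg Prod.fst he
    have he2 := congrArg Prod.snd he
    simp only at he1 he2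
    have hhigh : ∀ p ∈ T.erase t, dig b p m1 = dig b p m2 := fun p hp =>
      congrFun (congrFun he1 p) hp
    have hlow : m1 % b ^ t = m2 % b ^ t := by
      have hdvd1 : b ^ N ∣ m1 % b ^ t := (Nat.dvd_mod_iff (pow_dvd_pow b hNt)).2 hv1
      have hdvd2 : b ^ N ∣ m2 % b ^ t := (Nat.dvd_mod_iff (pow_dvd_pow b hNt)).2 hv2
      calc m1 % b ^ t = m1 % b ^ t / b ^ N * b ^ N := (Nat.div_mul_cancel hdvd1).symm
        _ = m2 % b ^ t / b ^ N * b ^ N := by rw [he2]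
        _ = m2 % b ^ t := Nat.div_mul_cancel hdvd2
    exact inj_core hb htT htmin hd1 hk1 hd2 hk2 hhigh hlow


lemma geo_sum_le {y : ℝ} (h0 : 0 ≤ y) (h1 : y < 1) (Q : Finset ℕ) (M : ℕ)
    (hQ : ∀ q ∈ Q, M ≤ q) : ∑ q ∈ Q, y ^ q ≤ y ^ M / (1 - y) := by
  classical
  have hpos : 0 < 1 - y := by linarith
  obtain ⟨K, hK⟩ : ∃ K, ∀ q ∈ Q, q < K := ⟨(Q.sup id) + 1, fun q hq =>
    Nat.lt_succ_of_le (Finset.le_sup (f := id) hq)⟩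
  have hsub : Q ⊆ Finset.Ico M K := fun q hq => Finset.mem_Ico.2 ⟨hQ q hq, hK q hq⟩
  calc ∑ q ∈ Q, y ^ q ≤ ∑ q ∈ Finset.Ico M K, y ^ q :=
        Finset.sum_le_sum_of_subset_of_nonneg hsub (fun i _ _ => pow_nonneg h0 i)
    _ = ∑ j ∈ Finset.range (K - M), y ^ (M + j) := by rw [Finset.sum_Ico_eq_sum_range]
    _ = y ^ M * ∑ j ∈ Finset.range (K - M), y ^ j := by
        rw [Finset.mul_sum]; exact Finset.sum_congr rfl fun j _ => by rw [pow_add]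
    _ ≤ y ^ M * (1 / (1 - y)) := by
        apply mul_le_mul_of_nonneg_left _ (pow_nonneg h0 M)
        calc ∑ j ∈ Finset.range (K - M), y ^ j = (1 - y ^ (K - M)) / (1 - y) := by
              rw [geom_sum_eq (by linarith)]
              rw [div_eq_div_iff (by linarith) (by linarith)]
              ring
          _ ≤ 1 / (1 - y) := by
              have hle : 1 - y ^ (K - M) ≤ 1 := by nlinarith [pow_nonneg h0 (K - M)]
              gcongr
    _ = y ^ M / (1 - y) := by ring

/-- `c_v = ∏_{i=1}^v x^i/(1-x^i)` -/
noncomputable def cprod (x : ℝ) (v : ℕ) : ℝ := ∏ i ∈ Icc 1 v, x ^ i / (1 - x ^ i)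

lemma cprod_nonneg {x : ℝ} (h0 : 0 ≤ x) (h1 : x < 1) (v : ℕ) : 0 ≤ cprod x v := by
  apply Finset.prod_nonneg
  intro i hi
  have hi1 : 1 ≤ i := (Finset.mem_Icc.1 hi).1
  have : x ^ i < 1 := pow_lt_one₀ h0 h1 (by omega)
  have h2 : (0:ℝ) < 1 - x ^ i := by linarith
  positivity

lemma cprod_succ (x : ℝ) (v : ℕ) : cprod x (v+1) = cprod x v * (x ^ (v+1) / (1 - x ^ (v+1))) := by
  rw [cprod, cprod, ← Finset.prod_Icc_succ_top (by omega)]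

/-- key summation lemma over families of finsets with min constraint -/
lemma D1 {x : ℝ} (h0 : 0 < x) (h1 : x < 1) :
    ∀ (v M : ℕ) (F : Finset (Finset ℕ)), (∀ T ∈ F, T.card = v ∧ ∀ p ∈ T, M ≤ p) →
    ∑ T ∈ F, x ^ (∑ p ∈ T, (p+1)) ≤ x ^ (v * M) * cprod x v := by
  intro v
  induction v with
  | zero =>
    intro M F hF
    have hsub : F ⊆ {∅} := by
      intro T hT
      rw [Finset.mem_singleton, ← Finset.card_eq_zero]
      exact (hF T hT).1
    calc ∑ T ∈ F, x ^ (∑ p ∈ T, (p+1)) ≤ ∑ T ∈ ({∅} : Finset (Finset ℕ)), x ^ (∑ p ∈ T, (p+1)) :=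
          Finset.sum_le_sum_of_subset_of_nonneg hsub (fun T _ _ => pow_nonneg h0.le _)
      _ = 1 := by simp
      _ = x ^ (0 * M) * cprod x 0 := by simp [cprod]
  | succ v ih =>
    intro M F hF
    have hne : ∀ T ∈ F, T.Nonempty := fun T hT => by
      rw [← Finset.card_pos, (hF T hT).1]; omega
    -- group by minimum
    set keyf : Finset ℕ → ℕ := fun T => WithTop.untopD 0 T.min with hkeyf
    have hkey : ∀ T ∈ F, keyf T ∈ T ∧ ∀ p ∈ T, keyf T ≤ p := by
      intro T hT
      have h := hne T hT
      have : keyf T = T.min' h := by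
        rw [hkeyf]; simp only []
        rw [← Finset.coe_min' h]
        rfl
      rw [this]
      exact ⟨T.min'_mem h, fun p hp => T.min'_le p hp⟩
    have hmaps : ∀ T ∈ F, keyf T ∈ F.image keyf := fun T hT => Finset.mem_image_of_mem _ hT
    rw [← Finset.sum_fiberwise_of_maps_to hmaps]
    -- bound each fiber
    have hfiber : ∀ q ∈ F.image keyf, ∑ T ∈ F.filter (fun T => keyf T = q), x ^ (∑ p ∈ T, (p+1))
        ≤ x ^ ((v+1) * (q+1)) * cprod x v := by
      intro q hq
      have step1 : ∀ T ∈ F.filter (fun T => keyf T = q),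
          x ^ (∑ p ∈ T, (p+1)) = x ^ (q+1) * x ^ (∑ p ∈ T.erase q, (p+1)) := by
        intro T hT
        rw [Finset.mem_filter] at hT
        have hqT : q ∈ T := by rw [← hT.2]; exact (hkey T hT.1).1
        rw [← pow_add, ← Finset.add_sum_erase _ _ hqT]
      rw [Finset.sum_congr rfl step1, ← Finset.mul_sum]
      have herase_inj : ∀ T1 ∈ F.filter (fun T => keyf T = q), ∀ T2 ∈ F.filter (fun T => keyf T = q),
          T1.erase q = T2.erase q → T1 = T2 := by
        intro T1 h1 T2 h2 he
        rw [Finset.mem_filter] at h1 h2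
        have hq1 : q ∈ T1 := by rw [← h1.2]; exact (hkey T1 h1.1).1
        have hq2 : q ∈ T2 := by rw [← h2.2]; exact (hkey T2 h2.1).1
        rw [← Finset.insert_erase hq1, ← Finset.insert_erase hq2, he]
      have himg : ∑ T' ∈ (F.filter (fun T => keyf T = q)).image (fun T => T.erase q), x ^ (∑ p ∈ T', (p+1))
          = ∑ T ∈ F.filter (fun T => keyf T = q), x ^ (∑ p ∈ T.erase q, (p+1)) :=
        Finset.sum_image herase_inj
      rw [← himg]
      have happ := ih (q+1) ((F.filter (fun T => keyf T = q)).image (fun T => T.erase q)) ?_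
      · calc x ^ (q+1) * ∑ T' ∈ (F.filter (fun T => keyf T = q)).image (fun T => T.erase q), x ^ (∑ p ∈ T', (p+1))
            ≤ x ^ (q+1) * (x ^ (v * (q+1)) * cprod x v) := by
              apply mul_le_mul_of_nonneg_left happ (pow_nonneg h0.le _)
          _ = x ^ ((v+1) * (q+1)) * cprod x v := by rw [← mul_assoc, ← pow_add]; ring_nf
      · intro T' hT'
        rw [Finset.mem_image] at hT'
        obtain ⟨T, hT, rfl⟩ := hT'
        rw [Finset.mem_filter] at hT
        have hqT : q ∈ T := by rw [← hT.2]; exact (hkey T hT.1).1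
        constructor
        · rw [Finset.card_erase_of_mem hqT, (hF T hT.1).1]
          omega
        · intro p hp
          have hpT := Finset.mem_of_mem_erase hp
          have hne' : p ≠ q := Finset.ne_of_mem_erase hp
          have := (hkey T hT.1).2 p hpT
          rw [hT.2] at this
          omega
    calc ∑ q ∈ F.image keyf, ∑ T ∈ F.filter (fun T => keyf T = q), x ^ (∑ p ∈ T, (p+1))
        ≤ ∑ q ∈ F.image keyf, x ^ ((v+1) * (q+1)) * cprod x v := Finset.sum_le_sum hfiber
      _ = cprod x v * x^(v+1) * ∑ q ∈ F.image keyf, (x ^ (v+1)) ^ q := by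
          rw [Finset.mul_sum]
          apply Finset.sum_congr rfl
          intro q _
          rw [← pow_mul]
          ring_nf
      _ ≤ cprod x v * x^(v+1) * ((x ^ (v+1)) ^ M / (1 - x ^ (v+1))) := by
          apply mul_le_mul_of_nonneg_left _ (mul_nonneg (cprod_nonneg h0.le h1 v) (by positivity))
          apply geo_sum_le (by positivity) (pow_lt_one₀ h0.le h1 (by omega))
          intro q hq
          rw [Finset.mem_image] at hq
          obtain ⟨T, hT, rfl⟩ := hq
          exact (hF T hT).2 _ ((hkey T hT).1)
      _ = x ^ ((v+1) * M) * cprod x (v+1) := by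
          rw [cprod_succ, ← pow_mul]
          field_simp

lemma D2 {x : ℝ} (h0 : 0 < x) (h1 : x < 1) {b α : ℕ} (hb : 1 ≤ b)
    (hbx : (b : ℝ) * x ^ α < 1) (hα : 1 ≤ α) (M : ℕ)
    (F : Finset (Finset ℕ)) (hF : ∀ T ∈ F, T.card = α ∧ ∀ p ∈ T, M ≤ p) :
    ∑ T ∈ F, (b : ℝ) ^ (WithTop.untopD 0 T.min - M) * x ^ (∑ p ∈ T, (p+1))
      ≤ cprod x (α-1) * x ^ (α * (M+1)) / (1 - (b : ℝ) * x ^ α) := by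
  have hbR : (0:ℝ) < b := by exact_mod_cast hb
  have hyx : (0:ℝ) ≤ (b:ℝ) * x ^ α := by positivity
  have hy1 : (0:ℝ) < 1 - (b:ℝ) * x ^ α := by linarith
  have hne : ∀ T ∈ F, T.Nonempty := fun T hT => by
    rw [← Finset.card_pos, (hF T hT).1]; omega
  set keyf : Finset ℕ → ℕ := fun T => WithTop.untopD 0 T.min with hkeyf
  have hkey : ∀ T ∈ F, keyf T ∈ T ∧ ∀ p ∈ T, keyf T ≤ p := by
    intro T hT
    have h := hne T hT
    have : keyf T = T.min' h := by
      rw [hkeyf]; simp only []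
      rw [← Finset.coe_min' h]; rfl
    rw [this]
    exact ⟨T.min'_mem h, fun p hp => T.min'_le p hp⟩
  have hmaps : ∀ T ∈ F, keyf T ∈ F.image keyf := fun T hT => Finset.mem_image_of_mem _ hT
  rw [← Finset.sum_fiberwise_of_maps_to hmaps]
  have hfiber : ∀ q ∈ F.image keyf,
      ∑ T ∈ F.filter (fun T => keyf T = q), (b : ℝ) ^ (WithTop.untopD 0 T.min - M) * x ^ (∑ p ∈ T, (p+1))
      ≤ (b:ℝ) ^ (q - M) * (x ^ (α * (q+1)) * cprod x (α-1)) := by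
    intro q hq
    have step1 : ∀ T ∈ F.filter (fun T => keyf T = q),
        (b : ℝ) ^ (WithTop.untopD 0 T.min - M) * x ^ (∑ p ∈ T, (p+1))
        = (b:ℝ) ^ (q - M) * x ^ (q+1) * x ^ (∑ p ∈ T.erase q, (p+1)) := by
      intro T hT
      rw [Finset.mem_filter] at hT
      have hqT : q ∈ T := by rw [← hT.2]; exact (hkey T hT.1).1
      have : WithTop.untopD 0 T.min = q := hT.2
      rw [this, mul_assoc, ← pow_add, ← Finset.add_sum_erase _ _ hqT]
    rw [Finset.sum_congr rfl step1, ← Finset.mul_sum]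
    have herase_inj : ∀ T1 ∈ F.filter (fun T => keyf T = q), ∀ T2 ∈ F.filter (fun T => keyf T = q),
        T1.erase q = T2.erase q → T1 = T2 := by
      intro T1 h1 T2 h2 he
      rw [Finset.mem_filter] at h1 h2
      have hq1 : q ∈ T1 := by rw [← h1.2]; exact (hkey T1 h1.1).1
      have hq2 : q ∈ T2 := by rw [← h2.2]; exact (hkey T2 h2.1).1
      rw [← Finset.insert_erase hq1, ← Finset.insert_erase hq2, he]
    have himg : ∑ T' ∈ (F.filter (fun T => keyf T = q)).image (fun T => T.erase q), x ^ (∑ p ∈ T', (p+1))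
        = ∑ T ∈ F.filter (fun T => keyf T = q), x ^ (∑ p ∈ T.erase q, (p+1)) :=
      Finset.sum_image herase_inj
    rw [← himg]
    have happ := D1 h0 h1 (α-1) (q+1) ((F.filter (fun T => keyf T = q)).image (fun T => T.erase q)) ?_
    · calc (b:ℝ) ^ (q-M) * x ^ (q+1) * ∑ T' ∈ (F.filter (fun T => keyf T = q)).image (fun T => T.erase q), x ^ (∑ p ∈ T', (p+1))
          ≤ (b:ℝ) ^ (q-M) * x ^ (q+1) * (x ^ ((α-1) * (q+1)) * cprod x (α-1)) := by
            apply mul_le_mul_of_nonneg_left happ (by positivity)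
        _ = (b:ℝ) ^ (q - M) * (x ^ (α * (q+1)) * cprod x (α-1)) := by
            rw [mul_assoc, ← mul_assoc (x ^ (q+1)), ← pow_add]
            congr 3
            have : α - 1 + 1 = α := by omega
            calc q + 1 + (α-1) * (q+1) = (α - 1 + 1) * (q+1) := by ring
              _ = α * (q+1) := by rw [this]
    · intro T' hT'
      rw [Finset.mem_image] at hT'
      obtain ⟨T, hT, rfl⟩ := hT'
      rw [Finset.mem_filter] at hT
      have hqT : q ∈ T := by rw [← hT.2]; exact (hkey T hT.1).1
      constructor
      · rw [Finset.card_erase_of_mem hqT, (hF T hT.1).1]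
      · intro p hp
        have hpT := Finset.mem_of_mem_erase hp
        have hne' : p ≠ q := Finset.ne_of_mem_erase hp
        have := (hkey T hT.1).2 p hpT
        rw [hT.2] at this
        omega
  have hQM : ∀ q ∈ F.image keyf, M ≤ q := by
    intro q hq
    rw [Finset.mem_image] at hq
    obtain ⟨T, hT, rfl⟩ := hq
    exact (hF T hT).2 _ ((hkey T hT).1)
  calc ∑ q ∈ F.image keyf, ∑ T ∈ F.filter (fun T => keyf T = q), (b : ℝ) ^ (WithTop.untopD 0 T.min - M) * x ^ (∑ p ∈ T, (p+1))
      ≤ ∑ q ∈ F.image keyf, (b:ℝ) ^ (q - M) * (x ^ (α * (q+1)) * cprod x (α-1)) :=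
        Finset.sum_le_sum hfiber
    _ = cprod x (α-1) * (x ^ α / (b:ℝ) ^ M) * ∑ q ∈ F.image keyf, ((b:ℝ) * x ^ α) ^ q := by
        rw [Finset.mul_sum]
        apply Finset.sum_congr rfl
        intro q hq
        have hqM := hQM q hq
        have hbq : (b:ℝ) ^ (q - M) = (b:ℝ) ^ q / (b:ℝ) ^ M := by
          rw [eq_div_iff (by positivity), ← pow_add]
          congr 1
          omega
        rw [hbq, mul_pow, ← pow_mul]
        rw [show α * (q + 1) = α + α * q from by ring, pow_add, pow_mul]
        ring
    _ ≤ cprod x (α-1) * (x ^ α / (b:ℝ) ^ M) * (((b:ℝ) * x ^ α) ^ M / (1 - (b:ℝ) * x ^ α)) := by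
        apply mul_le_mul_of_nonneg_left _ (by have := cprod_nonneg h0.le h1 (α-1); positivity)
        exact geo_sum_le hyx hbx _ M hQM
    _ = cprod x (α-1) * x ^ (α * (M+1)) / (1 - (b : ℝ) * x ^ α) := by
        rw [mul_pow, ← pow_mul]
        have hbM : ((b:ℝ)) ^ M ≠ 0 := by positivity
        have : x ^ α * x ^ (α * M) = x ^ (α * (M+1)) := by
          rw [← pow_add]; congr 1; ring
        field_simp
        rw [← this]
        ring

lemma mua_eq_sum_keyset (α m : ℕ) : mua b α m = ∑ i ∈ keyset b α m, (i+1) := rfl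
lemma keyset_subset' (α m : ℕ) : keyset b α m ⊆ digitSet b m := Finset.filter_subset _ _

lemma keyset_card (α m : ℕ) : (keyset b α m).card = min (digitSet b m).card α :=
  card_filter_lt α _ _ rfl

lemma digitSet_nonempty (hb : 1 < b) {m : ℕ} (hm : m ≠ 0) : (digitSet b m).Nonempty := by
  refine ⟨Nat.log b m, (mem_digitSet hb).2 ?_⟩
  have h1 : b ^ Nat.log b m ≤ m := Nat.pow_log_le_self b hm
  have h2 : m < b ^ (Nat.log b m + 1) := Nat.lt_pow_succ_log_self hb m
  have hge : 1 ≤ m / b ^ Nat.log b m := (Nat.one_le_div_iff (by positivity)).2 h1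
  have hlt : m / b ^ Nat.log b m < b := by
    rw [Nat.div_lt_iff_lt_mul (by positivity)]
    calc m < b ^ (Nat.log b m + 1) := h2
      _ = b * b ^ Nat.log b m := by ring
  rw [dig, Nat.mod_eq_of_lt hlt]
  omega

lemma two_le_card_digitSet (hb : 1 < b) {m : ℕ} (hm : m ≠ 0) (hd : bdelta b m % b = 0) :
    2 ≤ (digitSet b m).card := by
  by_contra h
  push_neg at h
  have hne := digitSet_nonempty hb hm
  have hcard : (digitSet b m).card = 1 := by
    have := Finset.card_pos.2 hne
    omega
  obtain ⟨p, hp⟩ := Finset.card_eq_one.1 hcard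
  have hsum : bdelta b m = dig b p m := by
    rw [bdelta_eq_sum_digitSet hb, hp, Finset.sum_singleton]
  have hpd : p ∈ digitSet b m := hp ▸ Finset.mem_singleton_self p
  have hne0 : dig b p m ≠ 0 := (mem_digitSet hb).1 hpd
  have hlt : dig b p m < b := dig_lt hb p m
  rw [hsum, Nat.mod_eq_of_lt hlt] at hd
  exact hne0 hd

lemma digitSet_eq_keyset_of_card_lt (hb : 1 < b) {α m : ℕ}
    (h : (keyset b α m).card < α) : digitSet b m = keyset b α m := by
  have hc := keyset_card (b := b) α m
  rw [hc] at h
  have hdc : (digitSet b m).card ≤ (keyset b α m).card := by rw [hc]; omega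
  exact (Finset.eq_of_subset_of_card_le (keyset_subset' α m) hdc).symm

/-- THE MAIN finite sum bound -/
lemma main_sum_le (hb : 1 < b) {α : ℕ} (hα : 2 ≤ α) {x : ℝ} (h0 : 0 < x) (h1 : x < 1)
    (hbx : (b:ℝ) * x ^ α < 1) (N : ℕ) (S : Finset ℕ)
    (hS : ∀ m ∈ S, m ≠ 0 ∧ bdelta b m % b = 0 ∧ b ^ N ∣ m) :
    ∑ m ∈ S, x ^ (mua b α m)
      ≤ (∑ v ∈ Icc 2 (α-1), ((b:ℝ)-1) ^ (v-1) * (x ^ (v*N) * cprod x v))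
        + ((b:ℝ)-1) ^ (α-1) * (cprod x (α-1) * x ^ (α*(N+1)) / (1 - (b:ℝ)*x^α)) := by
  classical
  have hbR : (1:ℝ) < b := by exact_mod_cast hb
  -- fiberwise by keyset
  have hmaps1 : ∀ m ∈ S, keyset b α m ∈ S.image (keyset b α) :=
    fun m hm => Finset.mem_image_of_mem _ hm
  rw [← Finset.sum_fiberwise_of_maps_to hmaps1]
  -- facts about each key T
  have keyfacts : ∀ T ∈ S.image (keyset b α), WithTop.untopD 0 T.min ∈ T ∧ (∀ p ∈ T, WithTop.untopD 0 T.min ≤ p)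
      ∧ 2 ≤ T.card ∧ T.card ≤ α ∧ (∀ p ∈ T, N ≤ p) := by
    intro T hT
    obtain ⟨m0, hm0S, rfl⟩ := Finset.mem_image.1 hT
    obtain ⟨hm0, hd0, hv0⟩ := hS m0 hm0S
    have h2v := two_le_card_digitSet hb hm0 hd0
    have hcard := keyset_card (b := b) α m0
    have hc2 : 2 ≤ (keyset b α m0).card := by rw [hcard]; omega
    have hcle : (keyset b α m0).card ≤ α := by rw [hcard]; omega
    have hne : (keyset b α m0).Nonempty := Finset.card_pos.1 (by omega)
    have hcoe : WithTop.untopD 0 (keyset b α m0).min = (keyset b α m0).min' hne := by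
      rw [← Finset.coe_min' hne]; rfl
    have hge : ∀ p ∈ keyset b α m0, N ≤ p := fun p hp =>
      digitSet_ge hb hv0 (keyset_subset' α m0 hp)
    rw [hcoe]
    exact ⟨(keyset b α m0).min'_mem hne, fun p hp => (keyset b α m0).min'_le p hp, hc2, hcle, hge⟩
  -- fiber sums
  have fiber_eq : ∀ T ∈ S.image (keyset b α),
      ∑ m ∈ S.filter (fun m => keyset b α m = T), x ^ (mua b α m)
      = ((S.filter (fun m => keyset b α m = T)).card : ℝ) * x ^ (∑ p ∈ T, (p+1)) := by
    intro T hT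
    rw [Finset.sum_congr rfl (fun m hm => ?_), Finset.sum_const, nsmul_eq_mul]
    rw [mua_eq_sum_keyset, (Finset.mem_filter.1 hm).2]
  -- second fiberwise by card
  have hmaps2 : ∀ T ∈ S.image (keyset b α), T.card ∈ Icc 2 α := by
    intro T hT
    obtain ⟨_, _, h2, hle, _⟩ := keyfacts T hT
    exact Finset.mem_Icc.2 ⟨h2, hle⟩
  rw [Finset.sum_congr rfl fiber_eq, ← Finset.sum_fiberwise_of_maps_to hmaps2]
  have hb1R : (0:ℝ) ≤ (b:ℝ) - 1 := by linarith
  -- now bound each card-class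
  obtain ⟨α', rfl⟩ : ∃ α', α = α' + 1 := ⟨α - 1, by omega⟩
  rw [Finset.sum_Icc_succ_top hα]
  have hsimp : α' + 1 - 1 = α' := rfl
  rw [hsimp]
  apply add_le_add
  · -- middle terms
    apply Finset.sum_le_sum
    intro v hv
    have hv2 : 2 ≤ v ∧ v ≤ α' := by
      have := Finset.mem_Icc.1 hv; omega
    set K := (S.image (keyset b (α'+1))).filter (fun T => T.card = v) with hK
    have hbound : ∀ T ∈ K, ((S.filter (fun m => keyset b (α'+1) m = T)).card : ℝ) * x ^ (∑ p ∈ T, (p+1))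
        ≤ ((b:ℝ)-1) ^ (v-1) * x ^ (∑ p ∈ T, (p+1)) := by
      intro T hTK
      rw [hK, Finset.mem_filter] at hTK
      obtain ⟨hT, hTv⟩ := hTK
      obtain ⟨htT, htmin, _, _, _⟩ := keyfacts T hT
      have hcnt := count_mid hb (α'+1) htT htmin (S.filter (fun m => keyset b (α'+1) m = T)) ?_
      · apply mul_le_mul_of_nonneg_right _ (by positivity)
        calc ((S.filter (fun m => keyset b (α'+1) m = T)).card : ℝ)
            ≤ (((b-1) ^ (T.card - 1) : ℕ) : ℝ) := by exact_mod_cast hcnt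
          _ = ((b:ℝ)-1) ^ (v-1) := by
              rw [hTv]
              push_cast [Nat.cast_sub (by omega : 1 ≤ b)]
              ring
      · intro m hm
        rw [Finset.mem_filter] at hm
        obtain ⟨_, hdm, _⟩ := hS m hm.1
        have hck : (keyset b (α'+1) m).card < α'+1 := by rw [hm.2, hTv]; omega
        exact ⟨hdm, hm.2, (digitSet_eq_keyset_of_card_lt hb hck).trans hm.2⟩
    calc ∑ T ∈ K, ((S.filter (fun m => keyset b (α'+1) m = T)).card : ℝ) * x ^ (∑ p ∈ T, (p+1))
        ≤ ∑ T ∈ K, ((b:ℝ)-1) ^ (v-1) * x ^ (∑ p ∈ T, (p+1)) := Finset.sum_le_sum hbound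
      _ = ((b:ℝ)-1) ^ (v-1) * ∑ T ∈ K, x ^ (∑ p ∈ T, (p+1)) := by rw [Finset.mul_sum]
      _ ≤ ((b:ℝ)-1) ^ (v-1) * (x ^ (v*N) * cprod x v) := by
          apply mul_le_mul_of_nonneg_left _ (by positivity)
          apply D1 h0 h1 v N K
          intro T hTK
          rw [hK, Finset.mem_filter] at hTK
          obtain ⟨_, _, _, _, hgeN⟩ := keyfacts T hTK.1
          exact ⟨hTK.2, hgeN⟩
  · -- tail
    set K := (S.image (keyset b (α'+1))).filter (fun T => T.card = α'+1) with hK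
    have hbound : ∀ T ∈ K, ((S.filter (fun m => keyset b (α'+1) m = T)).card : ℝ) * x ^ (∑ p ∈ T, (p+1))
        ≤ ((b:ℝ)-1) ^ α' * ((b:ℝ) ^ (WithTop.untopD 0 T.min - N) * x ^ (∑ p ∈ T, (p+1))) := by
      intro T hTK
      rw [hK, Finset.mem_filter] at hTK
      obtain ⟨hT, hTv⟩ := hTK
      obtain ⟨htT, htmin, _, _, hgeN⟩ := keyfacts T hT
      have hNt : N ≤ WithTop.untopD 0 T.min := hgeN _ htT
      have hcnt := count_tail hb (α'+1) N htT htmin hNt (S.filter (fun m => keyset b (α'+1) m = T)) ?_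
      · rw [← mul_assoc]
        apply mul_le_mul_of_nonneg_right _ (by positivity)
        calc ((S.filter (fun m => keyset b (α'+1) m = T)).card : ℝ)
            ≤ (((b-1) ^ (T.card - 1) * b ^ (WithTop.untopD 0 T.min - N) : ℕ) : ℝ) := by exact_mod_cast hcnt
          _ = ((b:ℝ)-1) ^ α' * (b:ℝ) ^ (WithTop.untopD 0 T.min - N) := by
              rw [hTv, hsimp]
              push_cast [Nat.cast_sub (by omega : 1 ≤ b)]
              ring
      · intro m hm
        rw [Finset.mem_filter] at hm
        obtain ⟨_, hdm, hvm⟩ := hS m hm.1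
        exact ⟨hdm, hm.2, hvm⟩
    calc ∑ T ∈ K, ((S.filter (fun m => keyset b (α'+1) m = T)).card : ℝ) * x ^ (∑ p ∈ T, (p+1))
        ≤ ∑ T ∈ K, ((b:ℝ)-1) ^ α' * ((b:ℝ) ^ (WithTop.untopD 0 T.min - N) * x ^ (∑ p ∈ T, (p+1))) :=
          Finset.sum_le_sum hbound
      _ = ((b:ℝ)-1) ^ α' * ∑ T ∈ K, (b:ℝ) ^ (WithTop.untopD 0 T.min - N) * x ^ (∑ p ∈ T, (p+1)) := by
          rw [Finset.mul_sum]
      _ ≤ ((b:ℝ)-1) ^ α' * (cprod x α' * x ^ ((α'+1)*(N+1)) / (1 - (b:ℝ)*x^(α'+1))) := by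
          apply mul_le_mul_of_nonneg_left _ (by positivity)
          have hD2 := D2 h0 h1 (b := b) (α := α'+1) (by omega) hbx (by omega) N K ?_
          · rw [hsimp] at hD2
            exact hD2
          · intro T hTK
            rw [hK, Finset.mem_filter] at hTK
            obtain ⟨_, _, _, _, hgeN⟩ := keyfacts T hTK.1
            exact ⟨hTK.2, hgeN⟩

end EbAux

open EbAux

/-- **Lemma (second digit-sum bound).** Let `b` be prime, `α ≥ 2` an integer,
`λ > 1/(2α)` real and `n ≥ 1`. Then
`∑_{k ∈ E_b, b^n ∣ k} b^{-2λ μ_α(⌊k/b⌋)} ≤ A_{α,b,λ,2} / b^{4λn}`. -/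
theorem eb_dvd_tsum_le_Atwo (b α n : ℕ) (hb : b.Prime) (hα : 2 ≤ α) (hn : 1 ≤ n)
    (l : ℝ) (hl : 1 / (2 * α) < l) :
    ∑' k : {k : ℕ // ebMem b k ∧ b ^ n ∣ k},
        (b : ℝ) ^ (-(2 * l * (mua b α ((k : ℕ) / b) : ℝ)))
      ≤ Atwo b α l / (b : ℝ) ^ (4 * l * n) := by
  classical
  have hb2 : 1 < b := hb.one_lt
  have hbR : (1:ℝ) < (b:ℝ) := by exact_mod_cast hb2
  have hbR0 : (0:ℝ) < (b:ℝ) := by linarith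
  have hαR : (0:ℝ) < (α:ℝ) := by exact_mod_cast (by omega : 0 < α)
  have hl0 : 0 < l := lt_trans (by positivity) hl
  have h2l : 0 < 2 * l := by linarith
  set X : ℝ := (b:ℝ) ^ (2 * l) with hX
  have hX1 : 1 < X := Real.one_lt_rpow_iff_of_pos hbR0 |>.2 (Or.inl ⟨hbR, by linarith⟩)
  have hX0 : 0 < X := by linarith
  set x : ℝ := X⁻¹ with hxdef
  have h0 : 0 < x := by positivity
  have h1 : x < 1 := by rw [hxdef]; exact inv_lt_one_of_one_lt₀ hX1
  have hxX : x * X = 1 := inv_mul_cancel₀ (by linarith)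
  -- powers
  have hXpow : ∀ i : ℕ, (b:ℝ) ^ (2 * l * (i:ℝ)) = X ^ i := by
    intro i
    rw [Real.rpow_mul hbR0.le, Real.rpow_natCast]
  have hxXpow : ∀ i : ℕ, x ^ i * X ^ i = 1 := fun i => by
    rw [← mul_pow, hxX, one_pow]
  have hone_lt_Xpow : ∀ i : ℕ, 1 ≤ i → 1 < X ^ i := fun i hi =>
    one_lt_pow₀ hX1 (by omega)
  -- 2*l*α > 1
  have h2lα : 1 < 2 * l * α := by
    have h2α : (0:ℝ) < 2 * α := by positivity
    rw [div_lt_iff₀ h2α] at hl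
    calc (1:ℝ) < l * (2 * α) := hl
      _ = 2 * l * α := by ring
  have hbXα : (b:ℝ) < X ^ α := by
    have : (b:ℝ) ^ (1:ℝ) < (b:ℝ) ^ (2 * l * (α:ℝ)) :=
      Real.rpow_lt_rpow_left_iff hbR |>.2 h2lα
    rw [Real.rpow_one] at this
    rw [← hXpow α]
    exact this
  have hbxα : (b:ℝ) * x ^ α < 1 := by
    have hxpos : (0:ℝ) < x ^ α := by positivity
    have := mul_lt_mul_of_pos_right hbXα hxpos
    rwa [mul_comm (X ^ α), hxXpow α] at this
  have hbx1 : (0:ℝ) < 1 - (b:ℝ) * x ^ α := by linarith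
  have hXαb : (0:ℝ) < X ^ α - b := by linarith
  have hb1 : (0:ℝ) < (b:ℝ) - 1 := by linarith
  -- summand rewrite
  have hsummand : ∀ μ : ℕ, (b : ℝ) ^ (-(2 * l * (μ:ℝ))) = x ^ μ := by
    intro μ
    rw [Real.rpow_neg hbR0.le, hXpow μ, hxdef, inv_pow]
  -- RHS rewrite
  have hRHS : Atwo b α l / (b : ℝ) ^ (4 * l * n) = Atwo b α l * x ^ (2 * n) := by
    have : (b:ℝ) ^ (4 * l * (n:ℝ)) = X ^ (2 * n) := by
      have h4 : 4 * l * (n:ℝ) = 2 * l * ((2 * n : ℕ) : ℝ) := by push_cast; ring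
      rw [h4, hXpow]
    rw [this, div_eq_mul_inv, hxdef, inv_pow]
  rw [hRHS]
  -- nonnegativity of RHS pieces
  have hcv : ∀ v, 0 ≤ cprod x v := cprod_nonneg h0.le h1
  have hprod_eq : ∀ w : ℕ, ∏ i ∈ Icc 1 w, ((b : ℝ) ^ (2 * l) * ((b : ℝ) - 1) / ((b : ℝ) ^ (2 * l * i) - 1))
      = (((b:ℝ)-1) * X) ^ w * cprod x w := by
    intro w
    have hstep : ∀ i ∈ Icc 1 w, ((b : ℝ) ^ (2 * l) * ((b : ℝ) - 1) / ((b : ℝ) ^ (2 * l * i) - 1))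
        = (((b:ℝ)-1) * X) * (x ^ i / (1 - x ^ i)) := by
      intro i hi
      have hi1 : 1 ≤ i := (Finset.mem_Icc.1 hi).1
      have hXi : 1 < X ^ i := hone_lt_Xpow i hi1
      have hxi : x ^ i < 1 := by
        have := hxXpow i
        nlinarith [pow_pos h0 i]
      have hne1 : (1 - x ^ i) ≠ 0 := by
        have : x ^ i < 1 := hxi
        intro h; rw [sub_eq_zero] at h; rw [← h] at this; exact lt_irrefl _ this
      have hne2 : (X ^ i - 1) ≠ 0 := by
        intro h; rw [sub_eq_zero] at h; rw [h] at hXi; exact lt_irrefl _ hXi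
      have hkey : x ^ i / (1 - x ^ i) = 1 / (X ^ i - 1) := by
        rw [div_eq_div_iff hne1 hne2]
        linear_combination hxXpow i
      rw [hXpow i, hkey]
      ring
    rw [Finset.prod_congr rfl hstep, Finset.prod_mul_distrib, Finset.prod_const,
      Nat.card_Icc]
    rw [show w + 1 - 1 = w from rfl]
    rfl
  -- rewrite Atwo
  have hAtwo : Atwo b α l = (∑ v ∈ Icc 2 (α-1), (1/((b:ℝ)-1)) * ((((b:ℝ)-1) * X) ^ v * cprod x v))
      + (X/(X^α - (b:ℝ))) * ((((b:ℝ)-1) * X) ^ (α-1) * cprod x (α-1)) := by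
    rw [Atwo, Finset.mul_sum]
    congr 1
    · exact Finset.sum_congr rfl fun v _ => by rw [hprod_eq v]
    · rw [hprod_eq (α-1), hXpow α]
  have hA0 : 0 ≤ Atwo b α l := by
    rw [hAtwo]
    apply add_nonneg
    · apply Finset.sum_nonneg
      intro v _
      exact mul_nonneg (by positivity) (mul_nonneg (by positivity) (hcv v))
    · exact mul_nonneg (div_nonneg hX0.le hXαb.le)
        (mul_nonneg (by positivity) (hcv (α-1)))
  obtain ⟨m', rfl⟩ : ∃ m', n = m' + 1 := ⟨n - 1, by omega⟩
  obtain ⟨β, rfl⟩ : ∃ β, α = β + 1 := ⟨α - 1, by omega⟩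
  have hse1 : β + 1 - 1 = β := rfl
  have hse2 : m' + 1 - 1 = m' := rfl
  -- final comparison lemma
  have hfinal : (∑ v ∈ Icc 2 β, ((b:ℝ)-1) ^ (v-1) * (x ^ (v*m') * cprod x v))
      + ((b:ℝ)-1) ^ β * (cprod x β * x ^ ((β+1)*(m'+1)) / (1 - (b:ℝ)*x^(β+1)))
      ≤ Atwo b (β+1) l * x ^ (2 * (m'+1)) := by
    have heq : (∑ v ∈ Icc 2 β, (1/((b:ℝ)-1)) * ((((b:ℝ)-1) * X) ^ v * cprod x v) * x ^ (2*(m'+1)))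
        + (X/(X^(β+1) - (b:ℝ))) * ((((b:ℝ)-1) * X) ^ β * cprod x β) * x ^ (2*(m'+1))
        = Atwo b (β+1) l * x ^ (2 * (m'+1)) := by
      rw [hAtwo, hse1, add_mul, Finset.sum_mul]
    refine le_trans (add_le_add ?_ ?_) (le_of_eq heq)
    · apply Finset.sum_le_sum
      intro v hv
      have hv2 : 2 ≤ v := (Finset.mem_Icc.1 hv).1
      obtain ⟨w, rfl⟩ : ∃ w, v = w + 1 := ⟨v - 1, by omega⟩
      have hw1 : 1 ≤ w := by omega
      have hpow : x ^ ((w+1)*((m'+1)-1)) = x ^ ((w+1)*m') := rfl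
      -- key exponent inequality
      have hexp : x ^ ((w+1)*m') ≤ X ^ (w+1) * x ^ (2*(m'+1)) := by
        have h1' : x ^ ((w+1)*m' + (w+1)) ≤ x ^ (2*(m'+1)) := by
          apply pow_le_pow_of_le_one h0.le h1.le
          have : (w+1)*m' + (w+1) = (w+1)*(m'+1) := by ring
          rw [this]
          exact Nat.mul_le_mul_right _ (by omega)
        have e : x ^ ((w+1)*m') = x ^ ((w+1)*m' + (w+1)) * X ^ (w+1) := by
          rw [pow_add, mul_assoc, hxXpow (w+1), mul_one]
        rw [e]
        calc x ^ ((w+1)*m' + (w+1)) * X ^ (w+1) ≤ x ^ (2*(m'+1)) * X ^ (w+1) :=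
              mul_le_mul_of_nonneg_right h1' (by positivity)
          _ = X ^ (w+1) * x ^ (2*(m'+1)) := by ring
      calc ((b:ℝ)-1) ^ (w+1-1) * (x ^ ((w+1)*m') * cprod x (w+1))
          ≤ ((b:ℝ)-1) ^ w * ((X ^ (w+1) * x ^ (2*(m'+1))) * cprod x (w+1)) := by
            apply mul_le_mul_of_nonneg_left _ (by positivity)
            exact mul_le_mul_of_nonneg_right hexp (hcv (w+1))
        _ = 1 / ((b:ℝ) - 1) * ((((b:ℝ) - 1) * X) ^ (w+1) * cprod x (w+1)) * x ^ (2*(m'+1)) := by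
            rw [mul_pow]
            field_simp
            ring
    · have hId : X/(X^(β+1) - (b:ℝ)) = x^β/(1 - (b:ℝ)*x^(β+1)) := by
        rw [div_eq_div_iff hXαb.ne' hbx1.ne']
        linear_combination (-X) * hxXpow β - ((b:ℝ)*x^β) * hxX
      have hpow2 : x ^ ((β+1)*(m'+1)) ≤ x ^ (2*(m'+1)) := by
        apply pow_le_pow_of_le_one h0.le h1.le
        exact Nat.mul_le_mul_right _ (by omega)
      calc ((b:ℝ)-1) ^ β * (cprod x β * x ^ ((β+1)*(m'+1)) / (1 - (b:ℝ)*x^(β+1)))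
          = (((b:ℝ)-1) ^ β * cprod x β * x ^ ((β+1)*(m'+1))) / (1 - (b:ℝ)*x^(β+1)) := by
            ring
        _ ≤ (((b:ℝ)-1) ^ β * cprod x β * x ^ (2*(m'+1))) / (1 - (b:ℝ)*x^(β+1)) := by
            rw [div_le_div_iff_of_pos_right hbx1]
            exact mul_le_mul_of_nonneg_left hpow2 (mul_nonneg (pow_nonneg hb1.le β) (hcv β))
        _ = X / (X ^ (β+1) - (b:ℝ)) * ((((b:ℝ) - 1) * X) ^ β * cprod x β) * x ^ (2*(m'+1)) := by
            rw [hId]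
            have h1' : x ^ β * (((b:ℝ) - 1) * X) ^ β = ((b:ℝ)-1) ^ β := by
              rw [← mul_pow, show x * (((b:ℝ)-1) * X) = ((b:ℝ)-1) * (x * X) from by ring, hxX,
                mul_one]
            rw [div_mul_eq_mul_div, div_mul_eq_mul_div, div_eq_div_iff hbx1.ne' hbx1.ne']
            linear_combination (-(cprod x β * x ^ (2*(m'+1)) * (1 - (b:ℝ)*x^(β+1)))) * h1'
  -- tsum reduction
  have hsum_le : ∀ s : Finset {k : ℕ // ebMem b k ∧ b ^ (m'+1) ∣ k},
      ∑ k ∈ s, (b : ℝ) ^ (-(2 * l * (mua b (β+1) ((k : ℕ) / b) : ℝ))) ≤ Atwo b (β+1) l * x ^ (2 * (m'+1)) := by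
    intro s
    have hrw : ∀ k ∈ s, (b : ℝ) ^ (-(2 * l * (mua b (β+1) ((k : ℕ) / b) : ℝ)))
        = x ^ (mua b (β+1) ((k : ℕ) / b)) := fun k _ => hsummand _
    rw [Finset.sum_congr rfl hrw]
    have hdvd : ∀ k : {k : ℕ // ebMem b k ∧ b ^ (m'+1) ∣ k}, b ∣ (k:ℕ) := fun k =>
      dvd_trans (dvd_pow_self b (by omega : m' + 1 ≠ 0)) k.2.2
    have hinj : ∀ k1 ∈ s, ∀ k2 ∈ s, (k1:ℕ)/b = (k2:ℕ)/b → k1 = k2 := by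
      intro k1 _ k2 _ h
      apply Subtype.ext
      have e1 : b * ((k1:ℕ)/b) = (k1:ℕ) := Nat.mul_div_cancel' (hdvd k1)
      have e2 : b * ((k2:ℕ)/b) = (k2:ℕ) := Nat.mul_div_cancel' (hdvd k2)
      rw [← e1, ← e2, h]
    have himg : ∑ m ∈ s.image (fun k => k.1 / b), x ^ (mua b (β+1) m)
        = ∑ k ∈ s, x ^ (mua b (β+1) (k.1 / b)) := Finset.sum_image hinj
    rw [← himg]
    refine le_trans (main_sum_le hb2 hα h0 h1 hbxα m' _ ?_) hfinal
    intro m hm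
    obtain ⟨k, hks, rfl⟩ := Finset.mem_image.1 hm
    obtain ⟨⟨hk0, hkd⟩, hkdvd⟩ := k.2
    have hbk : b ∣ (k:ℕ) := hdvd k
    have hkeq : b * ((k:ℕ)/b) = (k:ℕ) := Nat.mul_div_cancel' hbk
    refine ⟨?_, ?_, ?_⟩
    · intro h
      rw [h, mul_zero] at hkeq
      exact hk0 hkeq.symm
    · have hkpos : 0 < (k:ℕ) := Nat.pos_of_ne_zero hk0
      have hdig : Nat.digits b (k:ℕ) = ((k:ℕ) % b) :: Nat.digits b ((k:ℕ)/b) :=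
        Nat.digits_def' hb2 hkpos
      have hmod : (k:ℕ) % b = 0 := Nat.mod_eq_zero_of_dvd hbk
      have : bdelta b (k:ℕ) = bdelta b ((k:ℕ)/b) := by
        rw [bdelta, bdelta, hdig, hmod, List.sum_cons, zero_add]
      rw [← this]
      exact hkd
    · obtain ⟨j, hj⟩ := hkdvd
      refine ⟨j, ?_⟩
      have : (k:ℕ) = b * (b ^ ((m'+1) - 1) * j) := by
        rw [hj, ← mul_assoc, ← pow_succ']
        rfl
      rw [this, Nat.mul_div_cancel_left _ (by omega : 0 < b)]
      rfl
  calc ∑' k : {k : ℕ // ebMem b k ∧ b ^ (m'+1) ∣ k},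
        (b : ℝ) ^ (-(2 * l * (mua b (β+1) ((k : ℕ) / b) : ℝ)))
      ≤ Atwo b (β+1) l * x ^ (2 * (m'+1)) := tsum_le_of_sum_le' (mul_nonneg hA0 (by positivity)) hsum_le
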